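/- arXiv:2202.01017 — 6 statements merged into one kernel-verified Lean document; each statement's English description precedes it below -/
import Mathlib

section
/- Let ℓᵢ: ℝ^d → ℝ (i = 1,...,K) be differentiable and L-smooth, with gradients gᵢ = ∇ℓᵢ(θ) at a point θ. Let α be a positive vector with GᵀGα = 1/α elementwise, where G has columns gᵢ, and set Δθ = Gα and μ = minⱼ 1/(L·K·αⱼ). Then for every i, ℓᵢ(θ - μΔθ) ≤ ℓᵢ(θ) - μ/(2αᵢ) < ℓᵢ(θ). In particular the Nash-MTL update strictly decreases every task loss. -/
open RealInnerProductSpace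

lemma descent_lemma {d : ℕ} (L : ℝ) (hL : 0 ≤ L) (f : EuclideanSpace ℝ (Fin d) → ℝ)
    (f' : EuclideanSpace ℝ (Fin d) → EuclideanSpace ℝ (Fin d))
    (hdiff : ∀ x, HasGradientAt f (f' x) x)
    (hlip : ∀ x y, ‖f' x - f' y‖ ≤ L * ‖x - y‖)
    (x y : EuclideanSpace ℝ (Fin d)) :
    f y ≤ f x + ⟪f' x, y - x⟫ + L / 2 * ‖y - x‖ ^ 2 := by
  set v := y - x with hv
  have hcontf' : Continuous f' := by
    have hlw : LipschitzWith ⟨L, hL⟩ f' :=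
      LipschitzWith.of_dist_le_mul fun a b => by
        rw [dist_eq_norm, dist_eq_norm]; exact hlip a b
    exact hlw.continuous
  have hline : ∀ t : ℝ, HasDerivAt (fun t : ℝ => x + t • v) v t := by
    intro t
    simpa using ((hasDerivAt_id t).smul_const v).const_add x
  have hderiv : ∀ t : ℝ, HasDerivAt (fun t => f (x + t • v)) ⟪f' (x + t • v), v⟫ t := by
    intro t
    have hf := (hdiff (x + t • v)).hasFDerivAt
    have := hf.comp_hasDerivAt t (hline t)
    simp at this
    exact this
  have hcont : Continuous fun t : ℝ => ⟪f' (x + t • v), v⟫ := by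
    exact (hcontf'.comp (by fun_prop)).inner continuous_const
  have hint : f (x + (1:ℝ) • v) - f (x + (0:ℝ) • v)
      = ∫ t in (0:ℝ)..1, ⟪f' (x + t • v), v⟫ := by
    exact (intervalIntegral.integral_eq_sub_of_hasDerivAt
      (fun t _ => hderiv t) (hcont.intervalIntegrable 0 1)).symm
  have hbound : ∫ t in (0:ℝ)..1, ⟪f' (x + t • v), v⟫
      ≤ ∫ t in (0:ℝ)..1, (⟪f' x, v⟫ + L * t * ‖v‖ ^ 2) := by
    apply intervalIntegral.integral_mono_on (by norm_num)
      (hcont.intervalIntegrable 0 1) ((by fun_prop : Continuous fun t : ℝ => ⟪f' x, v⟫ + L * t * ‖v‖^2).intervalIntegrable 0 1)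
    intro t ht
    have h1 : ⟪f' (x + t • v), v⟫ - ⟪f' x, v⟫ = ⟪f' (x + t • v) - f' x, v⟫ := by
      rw [inner_sub_left]
    have h2 : ⟪f' (x + t • v) - f' x, v⟫ ≤ ‖f' (x + t • v) - f' x‖ * ‖v‖ :=
      real_inner_le_norm _ _
    have h3 : ‖f' (x + t • v) - f' x‖ ≤ L * (t * ‖v‖) := by
      have := hlip (x + t • v) x
      simpa [norm_smul, abs_of_nonneg ht.1, mul_assoc] using this
    nlinarith [norm_nonneg v, ht.1]
  have hval : ∫ t in (0:ℝ)..1, (⟪f' x, v⟫ + L * t * ‖v‖ ^ 2)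
      = ⟪f' x, v⟫ + L / 2 * ‖v‖ ^ 2 := by
    have e1 : ∫ t in (0:ℝ)..1, L * t * ‖v‖ ^ 2 = L / 2 * ‖v‖ ^ 2 := by
      have : ∀ t : ℝ, L * t * ‖v‖ ^ 2 = (L * ‖v‖ ^ 2) * t := fun t => by ring
      rw [intervalIntegral.integral_congr (g := fun t => (L * ‖v‖ ^ 2) * t) (fun t _ => this t),
        intervalIntegral.integral_const_mul, integral_id]
      ring
    rw [intervalIntegral.integral_add (continuous_const.intervalIntegrable 0 1)
      ((by fun_prop : Continuous fun t : ℝ => L * t * ‖v‖ ^ 2).intervalIntegrable 0 1), e1]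
    simp
  have : f y - f x ≤ ⟪f' x, v⟫ + L / 2 * ‖v‖ ^ 2 := by
    have h0 : x + (0:ℝ) • v = x := by simp
    have h1 : x + (1:ℝ) • v = y := by simp [hv]
    rw [h0, h1] at hint
    linarith [hint ▸ le_trans (le_of_eq hint) (hbound.trans (le_of_eq hval))]
  linarith

/-- Per-task descent of the Nash-MTL update: with `L`-smooth losses, gradients `g i` at `θ`,
`α > 0` solving `GᵀGα = 1/α`, `Δθ = ∑ αᵢgᵢ` and `μ = minⱼ 1/(LKαⱼ)`, every task loss strictly
decreases: `ℓᵢ(θ - μΔθ) ≤ ℓᵢ(θ) - μ/(2αᵢ) < ℓᵢ(θ)`. -/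
theorem stmt_6 {d K : ℕ} (hK : 0 < K) (L : ℝ) (hL : 0 < L)
    (ℓ : Fin K → EuclideanSpace ℝ (Fin d) → ℝ)
    (ℓ' : Fin K → EuclideanSpace ℝ (Fin d) → EuclideanSpace ℝ (Fin d))
    (hdiff : ∀ i x, HasGradientAt (ℓ i) (ℓ' i x) x)
    (hsmooth : ∀ i x y, ‖ℓ' i x - ℓ' i y‖ ≤ L * ‖x - y‖)
    (θ : EuclideanSpace ℝ (Fin d))
    (g : Fin K → EuclideanSpace ℝ (Fin d)) (hg : ∀ i, g i = ℓ' i θ)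
    (α : Fin K → ℝ) (hα : ∀ i, 0 < α i)
    (heq : ∀ i, ⟪g i, ∑ j, α j • g j⟫ = 1 / α i)
    (Δθ : EuclideanSpace ℝ (Fin d)) (hΔθ : Δθ = ∑ j, α j • g j)
    (μ : ℝ) (hμ : μ = ⨅ j, 1 / (L * K * α j)) :
    ∀ i, ℓ i (θ - μ • Δθ) ≤ ℓ i θ - μ / (2 * α i) ∧
      ℓ i θ - μ / (2 * α i) < ℓ i θ := by
  have hKpos : (0:ℝ) < K := by exact_mod_cast hK
  haveI : Nonempty (Fin K) := ⟨⟨0, hK⟩⟩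
  have hbdd : BddBelow (Set.range fun j => 1 / (L * K * α j)) :=
    Set.Finite.bddBelow (Set.finite_range _)
  have hμpos : 0 < μ := by
    rw [hμ]
    obtain ⟨i, hi⟩ := exists_eq_ciInf_of_finite (f := fun j => 1 / (L * K * α j))
    rw [← hi]
    have := hα i
    positivity
  have hμle : ∀ i, μ ≤ 1 / (L * K * α i) := fun i => hμ ▸ ciInf_le hbdd i
  have hnorm : ‖Δθ‖ ^ 2 = K := by
    have : ‖Δθ‖ ^ 2 = ⟪Δθ, Δθ⟫ := (real_inner_self_eq_norm_sq Δθ).symm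
    rw [this]
    nth_rewrite 1 [hΔθ]
    rw [sum_inner]
    have : ∀ j, ⟪α j • g j, Δθ⟫ = (1:ℝ) := by
      intro j
      rw [real_inner_smul_left, hΔθ, heq j]
      exact mul_one_div_cancel (hα j).ne'
    simp [this]
  intro i
  have hdesc := descent_lemma L hL.le (ℓ i) (ℓ' i) (hdiff i) (hsmooth i) θ (θ - μ • Δθ)
  have hsub : θ - μ • Δθ - θ = -(μ • Δθ) := by abel
  rw [hsub] at hdesc
  have hin : ⟪ℓ' i θ, -(μ • Δθ)⟫ = -(μ * (1 / α i)) := by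
    rw [inner_neg_right, real_inner_smul_right, ← hg, hΔθ, heq i]
  have hnn : ‖-(μ • Δθ)‖ ^ 2 = μ ^ 2 * K := by
    rw [norm_neg, norm_smul, mul_pow, ← hnorm]
    simp [sq_abs]
  rw [hin, hnn] at hdesc
  have hαi := hα i
  have hkey : μ * (L * K * α i) ≤ 1 := by
    have := hμle i
    rw [le_div_iff₀ (by positivity)] at this
    linarith
  constructor
  · have : -(μ * (1 / α i)) + L / 2 * (μ ^ 2 * K) ≤ -(μ / (2 * α i)) := by
      rw [neg_add_le_iff_le_add]
      have h1 : L / 2 * (μ ^ 2 * K) = μ / 2 * (μ * (L * K)) := by ring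
      have h2 : μ * (L * K) ≤ 1 / α i := by
        rw [le_div_iff₀ hαi]; linarith [hkey]
      have h3 : μ / 2 * (μ * (L * K)) ≤ μ / 2 * (1 / α i) := by
        apply mul_le_mul_of_nonneg_left h2 (by positivity)
      have h4 : -(μ / (2 * α i)) + μ * (1 / α i) = μ / 2 * (1 / α i) := by
        field_simp; ring
      linarith
    linarith
  · have : 0 < μ / (2 * α i) := by positivity
    linarith
end

section
/- Let ℓ₁,...,ℓ_K: ℝ^d → ℝ be differentiable, L-smooth, bounded below, with all sublevel sets of the average loss compact. Consider the sequence θ^(t+1) = θ^(t) - μ^(t)·G^(t)α^(t), where G^(t) is the matrix of gradients at θ^(t), α^(t) > 0 solves (G^(t))ᵀG^(t)α^(t) = 1/α^(t), and μ^(t) = minᵢ 1/(L·K·αᵢ^(t)). Then μ^(t) → 0 and ‖α^(t)‖ → ∞. -/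
open RealInnerProductSpace

lemma descent_aux {E : Type*} [NormedAddCommGroup E] [InnerProductSpace ℝ E] [CompleteSpace E]
    (F : E → ℝ) (F' : E → E) (hF : ∀ x, HasGradientAt F (F' x) x)
    (L : ℝ) (hlip : ∀ x y, ‖F' x - F' y‖ ≤ L * ‖x - y‖)
    (x v : E) : F (x + v) ≤ F x + ⟪F' x, v⟫ + L / 2 * ‖v‖ ^ 2 := by
  set φ : ℝ → ℝ := fun s => F (x + s • v) with hφdef
  have hc : ∀ s : ℝ, HasDerivAt (fun s : ℝ => x + s • v) v s := fun s => by
    simpa using ((hasDerivAt_id s).smul_const v).const_add x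
  have hφ : ∀ s : ℝ, HasDerivAt φ ⟪F' (x + s • v), v⟫ s := by
    intro s
    have := ((hF (x + s • v)).hasFDerivAt).comp_hasDerivAt s (hc s)
    simp only [InnerProductSpace.toDual_apply_apply] at this
    exact this
  set ψ : ℝ → ℝ := fun s => φ s - (s * ⟪F' x, v⟫ + L / 2 * s ^ 2 * ‖v‖ ^ 2) with hψdef
  have hψ : ∀ s : ℝ, HasDerivAt ψ (⟪F' (x + s • v), v⟫ - (⟪F' x, v⟫ + L * s * ‖v‖ ^ 2)) s := by
    intro s
    have h1 : HasDerivAt (fun s : ℝ => s * ⟪F' x, v⟫ + L / 2 * s ^ 2 * ‖v‖ ^ 2)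
        (⟪F' x, v⟫ + L * s * ‖v‖ ^ 2) s := by
      have h2 : HasDerivAt (fun s : ℝ => s * ⟪F' x, v⟫) ⟪F' x, v⟫ s := by
        simpa using (hasDerivAt_id s).mul_const ⟪F' x, v⟫
      have h3 : HasDerivAt (fun s : ℝ => L / 2 * s ^ 2 * ‖v‖ ^ 2) (L * s * ‖v‖ ^ 2) s := by
        have : HasDerivAt (fun s : ℝ => s ^ 2) (2 * s) s := by
          simpa using hasDerivAt_pow 2 s
        have := (this.const_mul (L / 2)).mul_const (‖v‖ ^ 2)
        exact this.congr_deriv (by ring)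
      exact h2.add h3
    exact (hφ s).sub h1
  have hanti : AntitoneOn ψ (Set.Icc (0:ℝ) 1) := by
    apply antitoneOn_of_deriv_nonpos (convex_Icc 0 1)
    · exact fun s _ => ((hψ s).continuousAt).continuousWithinAt
    · exact fun s _ => ((hψ s).differentiableAt).differentiableWithinAt
    · intro s hs
      rw [interior_Icc] at hs
      rw [(hψ s).deriv]
      have key : ⟪F' (x + s • v) - F' x, v⟫ ≤ L * s * ‖v‖ ^ 2 := by
        calc ⟪F' (x + s • v) - F' x, v⟫ ≤ ‖F' (x + s • v) - F' x‖ * ‖v‖ :=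
              real_inner_le_norm _ _
          _ ≤ (L * ‖(x + s • v) - x‖) * ‖v‖ := by
              gcongr; exact hlip _ _
          _ = L * (|s| * ‖v‖) * ‖v‖ := by rw [add_sub_cancel_left, norm_smul]; simp
          _ = L * |s| * ‖v‖ ^ 2 := by ring
          _ = L * s * ‖v‖ ^ 2 := by rw [abs_of_pos hs.1]
      have : ⟪F' (x + s • v), v⟫ - ⟪F' x, v⟫ ≤ L * s * ‖v‖ ^ 2 := by
        rwa [← inner_sub_left]
      linarith
  have h01 := hanti (Set.left_mem_Icc.2 zero_le_one) (Set.right_mem_Icc.2 zero_le_one) zero_le_one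
  simp only [hψdef, hφdef, zero_smul, add_zero, one_smul, zero_mul, one_pow, mul_one,
    sub_zero, zero_pow, mul_zero] at h01
  linarith

/-- For the Nash-MTL iteration with `L`-smooth losses bounded below and compact sublevel sets
of the average loss, the step sizes `μ⁽ᵗ⁾` tend to `0` and `‖α⁽ᵗ⁾‖` tends to infinity. -/
theorem stmt_9 {d K : ℕ} (hK : 0 < K) (L : ℝ) (hL : 0 < L)
    (ℓ : Fin K → EuclideanSpace ℝ (Fin d) → ℝ)
    (ℓ' : Fin K → EuclideanSpace ℝ (Fin d) → EuclideanSpace ℝ (Fin d))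
    (hdiff : ∀ i x, HasGradientAt (ℓ i) (ℓ' i x) x)
    (hsmooth : ∀ i x y, ‖ℓ' i x - ℓ' i y‖ ≤ L * ‖x - y‖)
    (hbdd : ∀ i, BddBelow (Set.range (ℓ i)))
    (hsublevel : ∀ c : ℝ, IsCompact {x | (1 / K : ℝ) * ∑ i, ℓ i x ≤ c})
    (θ : ℕ → EuclideanSpace ℝ (Fin d)) (α : ℕ → Fin K → ℝ) (μ : ℕ → ℝ)
    (hα : ∀ t i, 0 < α t i)
    (heq : ∀ t i, ⟪ℓ' i (θ t), ∑ j, α t j • ℓ' j (θ t)⟫ = 1 / α t i)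
    (hμ : ∀ t, μ t = ⨅ j, 1 / (L * K * α t j))
    (hstep : ∀ t, θ (t + 1) = θ t - μ t • ∑ j, α t j • ℓ' j (θ t)) :
    Filter.Tendsto μ Filter.atTop (nhds 0) ∧
      Filter.Tendsto (fun t => Real.sqrt (∑ i, (α t i) ^ 2)) Filter.atTop Filter.atTop := by
  haveI : Nonempty (Fin K) := Fin.pos_iff_nonempty.1 hK
  have hKpos : (0:ℝ) < K := Nat.cast_pos.2 hK
  set F : EuclideanSpace ℝ (Fin d) → ℝ := fun x => (1 / K : ℝ) * ∑ i, ℓ i x with hFdef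
  set F' : EuclideanSpace ℝ (Fin d) → EuclideanSpace ℝ (Fin d) :=
    fun x => (K : ℝ)⁻¹ • ∑ i, ℓ' i x with hF'def
  have hF : ∀ x, HasGradientAt F (F' x) x := by
    intro x
    have h1 : HasFDerivAt (fun y => ∑ i, ℓ i y)
        (∑ i, (InnerProductSpace.toDual ℝ _ (ℓ' i x) :
          EuclideanSpace ℝ (Fin d) →L[ℝ] ℝ)) x :=
      HasFDerivAt.fun_sum fun i _ => (hdiff i x).hasFDerivAt
    have h2 := h1.const_mul (1 / K : ℝ)
    rw [hasGradientAt_iff_hasFDerivAt]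
    refine h2.congr_fderiv ?_
    ext w
    simp [F', real_inner_smul_left, inner_sum, one_div]
  have hlip : ∀ x y, ‖F' x - F' y‖ ≤ L * ‖x - y‖ := by
    intro x y
    have h1 : F' x - F' y = (K : ℝ)⁻¹ • ∑ i, (ℓ' i x - ℓ' i y) := by
      simp [F', Finset.sum_sub_distrib, smul_sub]
    rw [h1, norm_smul]
    have h2 : ‖∑ i, (ℓ' i x - ℓ' i y)‖ ≤ ∑ i : Fin K, L * ‖x - y‖ :=
      (norm_sum_le _ _).trans (Finset.sum_le_sum fun i _ => hsmooth i x y)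
    rw [Finset.sum_const, Finset.card_univ, Fintype.card_fin, nsmul_eq_mul] at h2
    calc ‖(K:ℝ)⁻¹‖ * ‖∑ i, (ℓ' i x - ℓ' i y)‖ ≤ (K:ℝ)⁻¹ * ((K:ℝ) * (L * ‖x - y‖)) := by
          rw [Real.norm_eq_abs, abs_of_pos (inv_pos.2 hKpos)]
          exact mul_le_mul_of_nonneg_left h2 (inv_pos.2 hKpos).le
      _ = L * ‖x - y‖ := by field_simp
  set g : ℕ → EuclideanSpace ℝ (Fin d) := fun t => ∑ j, α t j • ℓ' j (θ t) with hgdef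
  have hgsq : ∀ t, ⟪g t, g t⟫ = K := by
    intro t
    rw [sum_inner]
    have : ∀ j ∈ Finset.univ, ⟪α t j • ℓ' j (θ t), g t⟫ = 1 := by
      intro j _
      rw [real_inner_smul_left, heq t j]
      rw [mul_one_div, div_self (hα t j).ne']
    rw [Finset.sum_congr rfl this]
    simp
  have hμle : ∀ t i, μ t ≤ 1 / (L * K * α t i) := by
    intro t i
    rw [hμ t]
    exact ciInf_le (Set.Finite.bddBelow (Set.finite_range _)) i
  have hLKα : ∀ t i, 0 < L * K * α t i := fun t i => mul_pos (mul_pos hL hKpos) (hα t i)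
  have hinvα : ∀ t i, L * K * μ t ≤ 1 / α t i := by
    intro t i
    have h := hμle t i
    rw [le_div_iff₀ (hLKα t i)] at h
    rw [le_div_iff₀ (hα t i)]
    nlinarith [hα t i]
  have hμpos : ∀ t, 0 < μ t := by
    intro t
    obtain ⟨j, hj⟩ := exists_eq_ciInf_of_finite (f := fun j => 1 / (L * K * α t j))
    rw [hμ t, ← hj]
    exact one_div_pos.2 (hLKα t j)
  have hFg : ∀ t, L * K * μ t ≤ ⟪F' (θ t), g t⟫ := by
    intro t
    have h1 : ⟪F' (θ t), g t⟫ = (K : ℝ)⁻¹ * ∑ i, (1 / α t i) := by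
      simp only [F', real_inner_smul_left, sum_inner]
      congr 1
      exact Finset.sum_congr rfl fun i _ => heq t i
    have h2 : (K : ℝ) * (L * K * μ t) ≤ ∑ i, (1 / α t i) := by
      have := Finset.sum_le_sum (fun i (_ : i ∈ Finset.univ) => hinvα t i)
      rw [Finset.sum_const, Finset.card_univ, Fintype.card_fin, nsmul_eq_mul] at this
      exact this
    rw [h1]
    calc L * K * μ t = (K:ℝ)⁻¹ * ((K:ℝ) * (L * K * μ t)) := by field_simp
      _ ≤ (K:ℝ)⁻¹ * ∑ i, (1 / α t i) :=
          mul_le_mul_of_nonneg_left h2 (inv_pos.2 hKpos).le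
  have hdesc : ∀ t, F (θ (t+1)) ≤ F (θ t) - L * K / 2 * μ t ^ 2 := by
    intro t
    have hθ : θ (t+1) = θ t + (-(μ t) • g t) := by
      rw [hstep t]; module
    have h := descent_aux F F' hF L hlip (θ t) (-(μ t) • g t)
    rw [← hθ] at h
    have hip : ⟪F' (θ t), -(μ t) • g t⟫ = -(μ t) * ⟪F' (θ t), g t⟫ :=
      real_inner_smul_right _ _ _
    have hnv : ‖-(μ t) • g t‖ ^ 2 = μ t ^ 2 * (K : ℝ) := by
      rw [← real_inner_self_eq_norm_sq, real_inner_smul_left, real_inner_smul_right, hgsq t]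
      ring
    rw [hip, hnv] at h
    have h3 := hFg t
    nlinarith [hμpos t, hμpos t, mul_le_mul_of_nonneg_left h3 (hμpos t).le]
  -- lower bound on F
  set B : ℝ := (1 / K : ℝ) * ∑ i, sInf (Set.range (ℓ i)) with hBdef
  have hFB : ∀ x, B ≤ F x := by
    intro x
    apply mul_le_mul_of_nonneg_left _ (by positivity)
    exact Finset.sum_le_sum fun i _ => csInf_le (hbdd i) ⟨x, rfl⟩
  have hsumle : ∀ n, ∑ t ∈ Finset.range n, (L * K / 2 * μ t ^ 2) ≤ F (θ 0) - B := by
    intro n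
    have key : ∑ t ∈ Finset.range n, (L * K / 2 * μ t ^ 2) ≤ F (θ 0) - F (θ n) := by
      induction n with
      | zero => simp
      | succ n ih =>
        rw [Finset.sum_range_succ]
        have := hdesc n
        linarith
    linarith [hFB (θ n)]
  have hsummable : Summable (fun t => L * K / 2 * μ t ^ 2) :=
    summable_of_sum_range_le (fun t => by positivity) hsumle
  have htend0 : Filter.Tendsto (fun t => L * K / 2 * μ t ^ 2) Filter.atTop (nhds 0) :=
    hsummable.tendsto_atTop_zero
  have hμsq : Filter.Tendsto (fun t => μ t ^ 2) Filter.atTop (nhds 0) := by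
    have h := htend0.const_mul (2 / (L * K))
    rw [mul_zero] at h
    have heqf : (fun t => μ t ^ 2) = fun t => 2 / (L * K) * (L * K / 2 * μ t ^ 2) := by
      funext t
      have h1 : (L : ℝ) * K ≠ 0 := by positivity
      field_simp
    rw [heqf]
    exact h
  have hμ0 : Filter.Tendsto μ Filter.atTop (nhds 0) := by
    have h := (Real.continuous_sqrt.tendsto 0).comp hμsq
    simp only [Function.comp, Real.sqrt_zero] at h
    have heqf : μ = fun t => Real.sqrt (μ t ^ 2) :=
      funext fun t => (Real.sqrt_sq (hμpos t).le).symm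
    rw [heqf]
    exact h
  refine ⟨hμ0, ?_⟩
  have hge : ∀ t, (L * K * μ t)⁻¹ ≤ Real.sqrt (∑ i, (α t i) ^ 2) := by
    intro t
    obtain ⟨j, hj⟩ := exists_eq_ciInf_of_finite (f := fun j => 1 / (L * K * α t j))
    rw [← hμ t] at hj
    have h1 : μ t * (L * K * α t j) = 1 := by
      rw [← hj, one_div, inv_mul_cancel₀ (hLKα t j).ne']
    have h1' : α t j * (L * K * μ t) = 1 := by linear_combination h1
    have h2 : (L * K * μ t)⁻¹ = α t j := (eq_inv_of_mul_eq_one_left h1').symm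
    rw [h2]
    calc α t j = Real.sqrt (α t j ^ 2) := (Real.sqrt_sq (hα t j).le).symm
      _ ≤ Real.sqrt (∑ i, (α t i) ^ 2) :=
          Real.sqrt_le_sqrt (Finset.single_le_sum (f := fun i => α t i ^ 2) (fun i _ => sq_nonneg _)
            (Finset.mem_univ j))
  have hLK : Filter.Tendsto (fun t => L * K * μ t) Filter.atTop (nhdsWithin 0 (Set.Ioi 0)) := by
    rw [tendsto_nhdsWithin_iff]
    constructor
    · have := hμ0.const_mul (L * K)
      simpa using this
    · exact Filter.Eventually.of_forall fun t => mul_pos (by positivity) (hμpos t)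
  have hinvtop : Filter.Tendsto (fun t => (L * K * μ t)⁻¹) Filter.atTop Filter.atTop := by
    have := hLK.inv_tendsto_nhdsGT_zero
    simpa [Pi.inv_def] using this
  exact Filter.tendsto_atTop_mono hge hinvtop
end

section
/- Under Assumptions that all losses ℓᵢ are differentiable, L-smooth, bounded below, with bounded sublevel sets, and that at any non-Pareto-stationary point the gradients are linearly independent, the Nash-MTL iterates θ^(t+1) = θ^(t) - μ^(t)G^(t)α^(t) with μ^(t) = minᵢ 1/(LKαᵢ^(t)) have a subsequence converging to a Pareto stationary point θ*, and all loss values ℓᵢ(θ^(t)) converge to ℓᵢ(θ*). -/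
open RealInnerProductSpace

/-- `θ` is Pareto stationary for losses with gradient maps `ℓ'` if some convex combination of
the task gradients at `θ` vanishes. -/
def ParetoStationary {d K : ℕ}
    (ℓ' : Fin K → EuclideanSpace ℝ (Fin d) → EuclideanSpace ℝ (Fin d))
    (θ : EuclideanSpace ℝ (Fin d)) : Prop :=
  ∃ w : Fin K → ℝ, (∀ i, 0 ≤ w i) ∧ (∑ i, w i = 1) ∧ (∑ i, w i • ℓ' i θ = 0)

lemma descent_lemma_s10 {E : Type*} [NormedAddCommGroup E] [InnerProductSpace ℝ E] [CompleteSpace E]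
    (f : E → ℝ) (f' : E → E) (L : ℝ)
    (hdiff : ∀ x, HasGradientAt f (f' x) x)
    (hsmooth : ∀ x y, ‖f' x - f' y‖ ≤ L * ‖x - y‖)
    (x u : E) : f (x + u) ≤ f x + ⟪f' x, u⟫ + L / 2 * ‖u‖ ^ 2 := by
  set g : ℝ → ℝ := fun s => f (x + s • u) - s * ⟪f' x, u⟫ - L / 2 * s ^ 2 * ‖u‖ ^ 2 with hg
  have hderiv : ∀ s : ℝ, HasDerivAt g
      (⟪f' (x + s • u), u⟫ - ⟪f' x, u⟫ - L * s * ‖u‖ ^ 2) s := by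
    intro s
    have hc : HasDerivAt (fun s : ℝ => x + s • u) u s := by
      simpa using ((hasDerivAt_id s).smul_const u).const_add x
    have h1 : HasDerivAt (fun s : ℝ => f (x + s • u)) ⟪f' (x + s • u), u⟫ s := by
      have := (hdiff (x + s • u)).hasFDerivAt.comp_hasDerivAt s hc
      simp at this
      exact this
    have h2 : HasDerivAt (fun s : ℝ => s * ⟪f' x, u⟫) ⟪f' x, u⟫ s := by
      simpa using (hasDerivAt_id s).mul_const ⟪f' x, u⟫
    have h3 : HasDerivAt (fun s : ℝ => L / 2 * s ^ 2 * ‖u‖ ^ 2) (L * s * ‖u‖ ^ 2) s := by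
      have : HasDerivAt (fun s : ℝ => s ^ 2) (2 * s) s := by
        simpa using hasDerivAt_pow 2 s
      have := (this.const_mul (L / 2)).mul_const (‖u‖ ^ 2)
      rw [show L * s * ‖u‖ ^ 2 = L / 2 * (2 * s) * ‖u‖ ^ 2 by ring]
      exact this
    exact (h1.sub h2).sub h3
  have hmono : AntitoneOn g (Set.Icc 0 1) := by
    apply antitoneOn_of_deriv_nonpos (convex_Icc 0 1)
    · exact Continuous.continuousOn
        (continuous_iff_continuousAt.2 fun s => (hderiv s).continuousAt)
    · intro s hs
      exact (hderiv s).differentiableAt.differentiableWithinAt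
    · intro s hs
      rw [(hderiv s).deriv]
      rw [interior_Icc] at hs
      have hs0 : 0 ≤ s := le_of_lt hs.1
      have : ⟪f' (x + s • u) - f' x, u⟫ ≤ L * s * ‖u‖ ^ 2 := by
        calc ⟪f' (x + s • u) - f' x, u⟫ ≤ ‖f' (x + s • u) - f' x‖ * ‖u‖ :=
              real_inner_le_norm _ _
          _ ≤ (L * ‖(x + s • u) - x‖) * ‖u‖ := by
              gcongr; exact hsmooth _ _
          _ = L * s * ‖u‖ ^ 2 := by
              simp [norm_smul, abs_of_nonneg hs0]; ring
      rw [inner_sub_left] at this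
      linarith
  have h01 := hmono (Set.left_mem_Icc.2 zero_le_one) (Set.right_mem_Icc.2 zero_le_one) zero_le_one
  simp only [hg] at h01
  simp only [zero_smul, add_zero, zero_mul, one_smul, one_mul, one_pow] at h01
  linarith

/-- Nonconvex convergence of Nash-MTL: under differentiability, `L`-smoothness, boundedness
below, compact sublevel sets, and linear independence of gradients at non-Pareto-stationary
points, the iterates have a subsequence converging to a Pareto stationary point `θ*`, and all
task losses converge to their values at `θ*`. -/
theorem stmt_10 {d K : ℕ} (hK : 0 < K) (L : ℝ) (hL : 0 < L)
    (ℓ : Fin K → EuclideanSpace ℝ (Fin d) → ℝ)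
    (ℓ' : Fin K → EuclideanSpace ℝ (Fin d) → EuclideanSpace ℝ (Fin d))
    (hdiff : ∀ i x, HasGradientAt (ℓ i) (ℓ' i x) x)
    (hsmooth : ∀ i x y, ‖ℓ' i x - ℓ' i y‖ ≤ L * ‖x - y‖)
    (hbdd : ∀ i, BddBelow (Set.range (ℓ i)))
    (hsublevel : ∀ c : ℝ, IsCompact {x | (1 / K : ℝ) * ∑ i, ℓ i x ≤ c})
    (hindep : ∀ x, ¬ ParetoStationary ℓ' x → LinearIndependent ℝ (fun i => ℓ' i x))
    (θ : ℕ → EuclideanSpace ℝ (Fin d)) (α : ℕ → Fin K → ℝ) (μ : ℕ → ℝ)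
    (hα : ∀ t i, 0 < α t i)
    (heq : ∀ t i, ⟪ℓ' i (θ t), ∑ j, α t j • ℓ' j (θ t)⟫ = 1 / α t i)
    (hμ : ∀ t, μ t = ⨅ j, 1 / (L * K * α t j))
    (hstep : ∀ t, θ (t + 1) = θ t - μ t • ∑ j, α t j • ℓ' j (θ t)) :
    ∃ (θstar : EuclideanSpace ℝ (Fin d)) (φ : ℕ → ℕ), StrictMono φ ∧
      Filter.Tendsto (θ ∘ φ) Filter.atTop (nhds θstar) ∧
      ParetoStationary ℓ' θstar ∧
      ∀ i, Filter.Tendsto (fun t => ℓ i (θ t)) Filter.atTop (nhds (ℓ i θstar)) := by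
  haveI : Nonempty (Fin K) := ⟨⟨0, hK⟩⟩
  have hKpos : (0 : ℝ) < K := by exact_mod_cast hK
  set v : ℕ → EuclideanSpace ℝ (Fin d) := fun t => ∑ j, α t j • ℓ' j (θ t) with hv
  -- norm squared of v is K
  have hvsq : ∀ t, ‖v t‖ ^ 2 = K := by
    intro t
    have : ⟪v t, v t⟫ = (K : ℝ) := by
      rw [hv]
      rw [sum_inner]
      have : ∀ j ∈ Finset.univ, ⟪α t j • ℓ' j (θ t), v t⟫ = 1 := by
        intro j _
        rw [real_inner_smul_left, heq t j, mul_one_div, div_self (ne_of_gt (hα t j))]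
      rw [Finset.sum_congr rfl this]
      simp
    rw [← real_inner_self_eq_norm_sq, this]
  -- max index
  have hmax : ∀ t, ∃ j₀, ∀ j, α t j ≤ α t j₀ := fun t => Finite.exists_max (α t)
  set m : ℕ → Fin K := fun t => (hmax t).choose with hmdef
  have hm : ∀ t j, α t j ≤ α t (m t) := fun t => (hmax t).choose_spec
  have hμ_le : ∀ t i, μ t ≤ 1 / (L * K * α t i) := by
    intro t i
    rw [hμ t]
    exact ciInf_le (Finite.bddBelow_range _) i
  have hμm : ∀ t, μ t = 1 / (L * K * α t (m t)) := by
    intro t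
    apply le_antisymm (hμ_le t (m t))
    rw [hμ t]
    apply le_ciInf
    intro j
    have h1 := hα t j
    apply one_div_le_one_div_of_le (by positivity)
    have h2 := hm t j
    exact mul_le_mul_of_nonneg_left h2 (by positivity)
  have hμpos : ∀ t, 0 < μ t := by
    intro t
    rw [hμm t]
    have := hα t (m t)
    positivity
  -- descent
  have key : ∀ t i, ℓ i (θ (t + 1)) ≤ ℓ i (θ t) - μ t / (2 * α t i) := by
    intro t i
    have hstep' : θ (t + 1) = θ t + (-(μ t) • v t) := by
      rw [hstep t]
      simp only [hv, neg_smul, ← sub_eq_add_neg]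
    have hd := descent_lemma_s10 (ℓ i) (ℓ' i) L (hdiff i) (hsmooth i) (θ t) (-(μ t) • v t)
    rw [← hstep'] at hd
    have hinner : ⟪ℓ' i (θ t), -(μ t) • v t⟫ = -(μ t * (1 / α t i)) := by
      rw [real_inner_smul_right, hv, heq t i]
      ring
    have hnorm : ‖-(μ t) • v t‖ ^ 2 = μ t ^ 2 * K := by
      rw [norm_smul, mul_pow, ← hvsq t]
      simp [sq_abs]
    rw [hinner, hnorm] at hd
    have hle : μ t * (L * K * α t i) ≤ 1 := by
      have := hμ_le t i
      have h0 := hα t i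
      rw [le_div_iff₀ (by positivity)] at this
      linarith
    have haipos := hα t i
    have h2 : L / 2 * (μ t ^ 2 * K) ≤ μ t / (2 * α t i) := by
      have hexp : L / 2 * (μ t ^ 2 * K) = (μ t * (L * K * α t i)) * (μ t / α t i) / 2 := by
        field_simp
      rw [hexp]
      have hpos : 0 < μ t / α t i := div_pos (hμpos t) haipos
      calc (μ t * (L * K * α t i)) * (μ t / α t i) / 2 ≤ 1 * (μ t / α t i) / 2 := by
            gcongr
        _ = μ t / (2 * α t i) := by rw [one_mul, div_div, mul_comm]
    have h4 : μ t * (1 / α t i) = μ t / α t i := by ring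
    have h5 : μ t / α t i - μ t / (2 * α t i) = μ t / (2 * α t i) := by
      field_simp
      ring
    linarith
  -- losses are antitone and converge
  have hdec : ∀ i, Antitone fun t => ℓ i (θ t) := by
    intro i
    apply antitone_nat_of_succ_le
    intro t
    have h1 := key t i
    have hp := hα t i
    have h2 : 0 < μ t / (2 * α t i) := div_pos (hμpos t) (by positivity)
    linarith
  have hbddb : ∀ i, BddBelow (Set.range fun t => ℓ i (θ t)) := by
    intro i
    obtain ⟨b, hb⟩ := hbdd i
    exact ⟨b, by rintro y ⟨t, rfl⟩; exact hb ⟨θ t, rfl⟩⟩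
  set c : Fin K → ℝ := fun i => ⨅ t, ℓ i (θ t) with hcdef
  have hconv : ∀ i, Filter.Tendsto (fun t => ℓ i (θ t)) Filter.atTop (nhds (c i)) :=
    fun i => tendsto_atTop_ciInf (hdec i) (hbddb i)
  set F : ℕ → ℝ := fun t => ∑ i, ℓ i (θ t) with hFdef
  have hFanti : Antitone F := by
    apply antitone_nat_of_succ_le
    intro t
    apply Finset.sum_le_sum
    intro i _
    exact hdec i (Nat.le_succ t)
  have hFconv : Filter.Tendsto F Filter.atTop (nhds (∑ i, c i)) :=
    tendsto_finset_sum _ fun i _ => hconv i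
  have hdiff0 : Filter.Tendsto (fun t => F t - F (t + 1)) Filter.atTop (nhds 0) := by
    have := hFconv.sub (hFconv.comp (Filter.tendsto_add_atTop_nat 1))
    simpa using this
  have hlow : ∀ t, 1 / (2 * L * K * α t (m t) ^ 2) ≤ F t - F (t + 1) := by
    intro t
    have hsum : ∑ i, (ℓ i (θ t) - ℓ i (θ (t + 1))) = F t - F (t + 1) := by
      rw [Finset.sum_sub_distrib]
    rw [← hsum]
    have h2 : ∀ i ∈ Finset.univ, (0 : ℝ) ≤ ℓ i (θ t) - ℓ i (θ (t + 1)) := by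
      intro i _
      have h := key t i
      have hp := hα t i
      have : 0 < μ t / (2 * α t i) := div_pos (hμpos t) (by positivity)
      linarith
    have h3 := Finset.single_le_sum h2 (Finset.mem_univ (m t))
    have h1 := key t (m t)
    have h4 : 1 / (2 * L * K * α t (m t) ^ 2) = μ t / (2 * α t (m t)) := by
      rw [hμm t]
      have := hα t (m t)
      field_simp
    linarith
  have htinv : Filter.Tendsto (fun t => 1 / (2 * L * K * α t (m t) ^ 2))
      Filter.atTop (nhds 0) := by
    apply squeeze_zero (fun t => by have := hα t (m t); positivity) hlow hdiff0
  have himax : Filter.Tendsto (fun t => α t (m t)) Filter.atTop Filter.atTop := by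
    rw [Filter.tendsto_atTop]
    intro b
    set M := max b 1 with hM
    have hM1 : (1 : ℝ) ≤ M := le_max_right _ _
    have hMb : b ≤ M := le_max_left _ _
    have hMpos : (0 : ℝ) < M := by linarith
    have hev := htinv.eventually_lt_const (show (0:ℝ) < 1 / (2 * L * K * M ^ 2) by positivity)
    filter_upwards [hev] with t ht
    have hαp := hα t (m t)
    by_contra hcon
    push_neg at hcon
    have hsq : α t (m t) ^ 2 ≤ M ^ 2 := by nlinarith
    have hden : 2 * L * K * α t (m t) ^ 2 ≤ 2 * L * K * M ^ 2 :=
      mul_le_mul_of_nonneg_left hsq (by positivity)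
    have := one_div_le_one_div_of_le (by positivity) hden
    linarith
  -- compactness and subsequence
  have hmem : ∀ t, θ t ∈ {x | (1 / K : ℝ) * ∑ i, ℓ i x ≤ (1 / K : ℝ) * F 0} := by
    intro t
    have := hFanti (Nat.zero_le t)
    have h1 : (1 / K : ℝ) * F t ≤ (1 / K : ℝ) * F 0 :=
      mul_le_mul_of_nonneg_left this (by positivity)
    simpa [hFdef] using h1
  obtain ⟨θstar, hθS, φ, hφ, hconvφ⟩ := (hsublevel ((1 / K : ℝ) * F 0)).tendsto_subseq hmem
  have hcont : ∀ i, ContinuousAt (ℓ i) θstar :=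
    fun i => (hdiff i θstar).differentiableAt.continuousAt
  have hlim : ∀ i, c i = ℓ i θstar := by
    intro i
    have h1 : Filter.Tendsto (fun t => ℓ i (θ (φ t))) Filter.atTop (nhds (c i)) :=
      (hconv i).comp hφ.tendsto_atTop
    have h2 : Filter.Tendsto (fun t => ℓ i (θ (φ t))) Filter.atTop (nhds (ℓ i θstar)) :=
      (hcont i).tendsto.comp hconvφ
    exact tendsto_nhds_unique h1 h2
  -- Pareto stationarity
  have hpareto : ParetoStationary ℓ' θstar := by
    by_contra hne
    have hLI := hindep θstar hne
    set T : (Fin K → ℝ) →ₗ[ℝ] EuclideanSpace ℝ (Fin d) :=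
      { toFun := fun w => ∑ i, w i • ℓ' i θstar,
        map_add' := by intro a b; simp [add_smul, Finset.sum_add_distrib],
        map_smul' := by intro r a; simp [smul_smul, Finset.smul_sum] } with hT
    have hker : LinearMap.ker T = ⊥ := by
      rw [LinearMap.ker_eq_bot']
      intro w hw
      exact funext (Fintype.linearIndependent_iff.1 hLI w hw)
    obtain ⟨C, hC0, hCa⟩ := T.exists_antilipschitzWith hker
    have hCpos : (0 : ℝ) < C := by exact_mod_cast hC0
    have hTle : ∀ w : Fin K → ℝ, ‖w‖ ≤ (C : ℝ) * ‖T w‖ := by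
      intro w
      have := hCa.le_mul_dist w 0
      simpa [dist_eq_norm] using this
    set ε : ℝ := 1 / (2 * C * K) with hε
    have hεpos : 0 < ε := by positivity
    have hdist0 : Filter.Tendsto (fun t => ‖θ (φ t) - θstar‖) Filter.atTop (nhds 0) := by
      have := tendsto_iff_dist_tendsto_zero.1 hconvφ
      simpa [dist_eq_norm] using this
    have hgrad : ∀ i : Fin K,
        Filter.Tendsto (fun t => ℓ' i (θ (φ t))) Filter.atTop (nhds (ℓ' i θstar)) := by
      intro i
      rw [tendsto_iff_dist_tendsto_zero]
      have hb : ∀ t, dist (ℓ' i (θ (φ t))) (ℓ' i θstar) ≤ L * ‖θ (φ t) - θstar‖ := fun t => by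
        rw [dist_eq_norm]; exact hsmooth i _ _
      have hg0 : Filter.Tendsto (fun t => L * ‖θ (φ t) - θstar‖) Filter.atTop (nhds 0) := by
        simpa using hdist0.const_mul L
      exact squeeze_zero (fun t => dist_nonneg) hb hg0
    have hEv1 : ∀ᶠ t in Filter.atTop, ∀ i, ‖ℓ' i (θ (φ t)) - ℓ' i θstar‖ < ε :=
      Filter.eventually_all.2 fun i => by
        have := Metric.tendsto_nhds.1 (hgrad i) ε hεpos
        simpa [dist_eq_norm] using this
    have himaxφ : Filter.Tendsto (fun t => α (φ t) (m (φ t))) Filter.atTop Filter.atTop :=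
      himax.comp hφ.tendsto_atTop
    have hEv2 : ∀ᶠ t in Filter.atTop, 2 * (C : ℝ) * Real.sqrt K < α (φ t) (m (φ t)) :=
      himaxφ.eventually_gt_atTop _
    obtain ⟨t, ht1, ht2⟩ := (hEv1.and hEv2).exists
    have hvnorm : ‖v (φ t)‖ = Real.sqrt K := by
      rw [← hvsq (φ t)]
      exact (Real.sqrt_sq (norm_nonneg _)).symm
    have hwnonneg : (0:ℝ) ≤ ‖α (φ t)‖ := norm_nonneg _
    have hTsub : T (α (φ t)) - v (φ t) = ∑ i, α (φ t) i • (ℓ' i θstar - ℓ' i (θ (φ t))) := by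
      simp [hT, hv, smul_sub, Finset.sum_sub_distrib]
    have hbound : ‖T (α (φ t)) - v (φ t)‖ ≤ ε * (K * ‖α (φ t)‖) := by
      rw [hTsub]
      calc ‖∑ i, α (φ t) i • (ℓ' i θstar - ℓ' i (θ (φ t)))‖
          ≤ ∑ i, ‖α (φ t) i • (ℓ' i θstar - ℓ' i (θ (φ t)))‖ := norm_sum_le _ _
        _ ≤ ∑ _i : Fin K, ‖α (φ t)‖ * ε := by
            apply Finset.sum_le_sum
            intro i _
            rw [norm_smul]
            apply mul_le_mul (norm_le_pi_norm (α (φ t)) i) ?_ (norm_nonneg _) hwnonneg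
            rw [norm_sub_rev]
            exact (ht1 i).le
        _ = ε * (K * ‖α (φ t)‖) := by
            simp [Finset.sum_const, Finset.card_univ]
            ring
    have hTw : ‖T (α (φ t))‖ ≤ Real.sqrt K + ε * (K * ‖α (φ t)‖) := by
      calc ‖T (α (φ t))‖ = ‖v (φ t) + (T (α (φ t)) - v (φ t))‖ := by
            congr 1
            abel
        _ ≤ ‖v (φ t)‖ + ‖T (α (φ t)) - v (φ t)‖ := norm_add_le _ _
        _ ≤ Real.sqrt K + ε * (K * ‖α (φ t)‖) := by
            rw [hvnorm]
            gcongr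
    have hmain : ‖α (φ t)‖ ≤ (C : ℝ) * Real.sqrt K + ‖α (φ t)‖ / 2 := by
      have h2 : (C : ℝ) * (ε * (K * ‖α (φ t)‖)) = ‖α (φ t)‖ / 2 := by
        rw [hε]
        field_simp
      calc ‖α (φ t)‖ ≤ (C : ℝ) * ‖T (α (φ t))‖ := hTle _
        _ ≤ (C : ℝ) * (Real.sqrt K + ε * (K * ‖α (φ t)‖)) := by gcongr
        _ = (C : ℝ) * Real.sqrt K + ‖α (φ t)‖ / 2 := by rw [mul_add, h2]
    have hwm : α (φ t) (m (φ t)) ≤ ‖α (φ t)‖ := by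
      have := norm_le_pi_norm (α (φ t)) (m (φ t))
      rwa [Real.norm_eq_abs, abs_of_pos (hα _ _)] at this
    have hsqnn : 0 ≤ Real.sqrt K := Real.sqrt_nonneg _
    linarith
  exact ⟨θstar, φ, hφ, hconvφ, hpareto, fun i => hlim i ▸ hconv i⟩
end

section
/- In the convex setting of the Nash-MTL convergence theorem, the distance to the limit point is monotone: ‖θ^(t+1) - θ*‖² ≤ ‖θ^(t) - θ*‖², where θ* is a partial limit satisfying ℓᵢ(θ*) ≤ ℓᵢ(θ^(t+1)) for all i and t. -/
open RealInnerProductSpace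

lemma grad_ineq {d : ℕ} {f : EuclideanSpace ℝ (Fin d) → ℝ}
    {g x : EuclideanSpace ℝ (Fin d)} (hc : ConvexOn ℝ Set.univ f)
    (hf : HasGradientAt f g x) (y : EuclideanSpace ℝ (Fin d)) :
    f x + ⟪g, y - x⟫ ≤ f y := by
  have hcomp : ConvexOn ℝ Set.univ (f ∘ (AffineMap.lineMap x y : ℝ →ᵃ[ℝ] _)) := by
    simpa using hc.comp_affineMap (AffineMap.lineMap x y)
  have hcurve : ∀ s : ℝ, HasDerivAt (fun s : ℝ => x + s • (y - x)) (y - x) s := by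
    intro s
    simpa using ((hasDerivAt_id s).smul_const (y - x)).const_add x
  have hline : ∀ s : ℝ, (AffineMap.lineMap x y : ℝ →ᵃ[ℝ] _) s = x + s • (y - x) := by
    intro s
    simp [AffineMap.lineMap_apply]
    module
  have hd : HasDerivAt (f ∘ (AffineMap.lineMap x y : ℝ →ᵃ[ℝ] _)) ⟪g, y - x⟫ 0 := by
    have h0 : HasFDerivAt f (InnerProductSpace.toDual ℝ _ g) x := hf.hasFDerivAt
    have h1 : HasDerivAt (fun s : ℝ => f (x + s • (y - x))) ⟪g, y - x⟫ 0 := by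
      have h0' : HasFDerivAt f (InnerProductSpace.toDual ℝ _ g)
          ((fun s : ℝ => x + s • (y - x)) 0) := by simpa using h0
      have := h0'.comp_hasDerivAt (0 : ℝ) (hcurve 0)
      exact this
    have : (f ∘ (AffineMap.lineMap x y : ℝ →ᵃ[ℝ] _)) = fun s : ℝ => f (x + s • (y - x)) := by
      funext s; simp [hline s]
    rw [this]
    exact h1
  have hs := hcomp.le_slope_of_hasDerivAt (Set.mem_univ (0 : ℝ)) (Set.mem_univ (1 : ℝ))
    one_pos hd
  have hval0 : (f ∘ (AffineMap.lineMap x y : ℝ →ᵃ[ℝ] _)) 0 = f x := by simp [hline]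
  have hval1 : (f ∘ (AffineMap.lineMap x y : ℝ →ᵃ[ℝ] _)) 1 = f y := by simp [hline]
  rw [slope_def_field, hval0, hval1] at hs
  simp only [sub_zero, div_one] at hs
  linarith

/-- In the convex setting, one Nash-MTL step does not increase the distance to any point
`θ*` whose losses are all below the post-step losses:
`‖θ⁽ᵗ⁺¹⁾ - θ*‖² ≤ ‖θ⁽ᵗ⁾ - θ*‖²`. -/
theorem stmt_13 {d K : ℕ} (hK : 0 < K) (L : ℝ) (hL : 0 < L)
    (ℓ : Fin K → EuclideanSpace ℝ (Fin d) → ℝ)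
    (ℓ' : Fin K → EuclideanSpace ℝ (Fin d) → EuclideanSpace ℝ (Fin d))
    (hdiff : ∀ i x, HasGradientAt (ℓ i) (ℓ' i x) x)
    (hsmooth : ∀ i x y, ‖ℓ' i x - ℓ' i y‖ ≤ L * ‖x - y‖)
    (hconvex : ∀ i, ConvexOn ℝ Set.univ (ℓ i))
    (θ : ℕ → EuclideanSpace ℝ (Fin d)) (α : ℕ → Fin K → ℝ) (μ : ℕ → ℝ)
    (hα : ∀ t i, 0 < α t i)
    (heq : ∀ t i, ⟪ℓ' i (θ t), ∑ j, α t j • ℓ' j (θ t)⟫ = 1 / α t i)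
    (hμ : ∀ t, μ t = ⨅ j, 1 / (L * K * α t j))
    (hstep : ∀ t, θ (t + 1) = θ t - μ t • ∑ j, α t j • ℓ' j (θ t))
    (hdesc : ∀ t i, ℓ i (θ (t + 1)) ≤ ℓ i (θ t) - μ t / (2 * α t i))
    (θstar : EuclideanSpace ℝ (Fin d))
    (hstar : ∀ t i, ℓ i θstar ≤ ℓ i (θ (t + 1))) :
    ∀ t, ‖θ (t + 1) - θstar‖ ^ 2 ≤ ‖θ t - θstar‖ ^ 2 := by
  intro t
  have hKne : (Fin K) → True := fun _ => trivial
  haveI : Nonempty (Fin K) := ⟨⟨0, hK⟩⟩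
  set Δ : EuclideanSpace ℝ (Fin d) := ∑ j, α t j • ℓ' j (θ t) with hΔ
  set a : EuclideanSpace ℝ (Fin d) := θ t - θstar with ha
  -- μ t ≥ 0
  have hμnn : 0 ≤ μ t := by
    rw [hμ t]
    apply Real.iInf_nonneg
    intro j
    have hK' : (0:ℝ) < K := by exact_mod_cast hK
    have := hα t j
    positivity
  -- ‖Δ‖² = K
  have hΔsq : ⟪Δ, Δ⟫ = (K : ℝ) := by
    have : ⟪Δ, Δ⟫ = ∑ i, α t i * ⟪ℓ' i (θ t), Δ⟫ := by
      rw [hΔ]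
      rw [sum_inner]
      congr 1
      funext i
      rw [real_inner_smul_left]
    rw [this]
    have : ∀ i, α t i * ⟪ℓ' i (θ t), Δ⟫ = 1 := by
      intro i
      rw [hΔ, heq t i, mul_one_div]
      exact div_self (hα t i).ne'
    rw [Finset.sum_congr rfl (fun i _ => this i)]
    simp
  -- inner bound
  have hinner : (μ t) * K / 2 ≤ ⟪Δ, a⟫ := by
    have hterm : ∀ i, μ t / 2 ≤ α t i * ⟪ℓ' i (θ t), a⟫ := by
      intro i
      have hg := grad_ineq (hconvex i) (hdiff i (θ t)) θstar
      have h1 : ℓ i (θ t) - ℓ i θstar ≤ ⟪ℓ' i (θ t), a⟫ := by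
        have : ⟪ℓ' i (θ t), θstar - θ t⟫ = -⟪ℓ' i (θ t), a⟫ := by
          rw [ha, ← inner_neg_right]
          congr 1
          abel
        rw [this] at hg
        linarith
      have h2 : μ t / (2 * α t i) ≤ ⟪ℓ' i (θ t), a⟫ := by
        have := hdesc t i
        have := hstar t i
        linarith
      have hαi := hα t i
      calc μ t / 2 = α t i * (μ t / (2 * α t i)) := by field_simp
        _ ≤ α t i * ⟪ℓ' i (θ t), a⟫ := by
            exact mul_le_mul_of_nonneg_left h2 hαi.le
    have : ⟪Δ, a⟫ = ∑ i, α t i * ⟪ℓ' i (θ t), a⟫ := by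
      rw [hΔ, sum_inner]
      congr 1
      funext i
      rw [real_inner_smul_left]
    rw [this]
    calc μ t * K / 2 = ∑ _i : Fin K, μ t / 2 := by
          simp [Finset.sum_const]
          ring
      _ ≤ ∑ i, α t i * ⟪ℓ' i (θ t), a⟫ := Finset.sum_le_sum (fun i _ => hterm i)
  -- expand
  have hexp : θ (t + 1) - θstar = a - μ t • Δ := by
    rw [hstep t, ha, hΔ]
    abel
  rw [hexp, norm_sub_sq_real]
  have h1 : ‖μ t • Δ‖ ^ 2 = μ t ^ 2 * K := by
    rw [norm_smul]
    rw [mul_pow]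
    have : ‖Δ‖ ^ 2 = (K : ℝ) := by rw [← real_inner_self_eq_norm_sq]; exact hΔsq
    rw [this]
    simp [sq_abs]
  have h2 : ⟪a, μ t • Δ⟫ = μ t * ⟪Δ, a⟫ := by
    rw [real_inner_smul_right, real_inner_comm]
  rw [h1, h2]
  nlinarith [mul_le_mul_of_nonneg_left hinner hμnn]
end

section
/- Let g₁, g₂ ∈ ℝ^d be linearly independent (K = 2 tasks). Then the Nash bargaining update direction Δθ = α₁g₁ + α₂g₂ with GᵀGα = 1/α, α > 0, is a positive multiple of g₁/‖g₁‖ + g₂/‖g₂‖, i.e., for two tasks the Nash-MTL update equals the sum of the normalized gradients up to positive scaling. -/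
open RealInnerProductSpace

/-- For two linearly independent tasks, the Nash-MTL update direction `α₁g₁ + α₂g₂` (with
`GᵀGα = 1/α`, `α > 0`) is a positive multiple of the sum of the normalized gradients. -/
theorem stmt_15 {d : ℕ} (g : Fin 2 → EuclideanSpace ℝ (Fin d))
    (hind : LinearIndependent ℝ g)
    (α : Fin 2 → ℝ) (hα : ∀ i, 0 < α i)
    (heq : ∀ i, ⟪g i, ∑ j, α j • g j⟫ = 1 / α i)
    (hpos : ∀ i, 0 < ⟪g i, ∑ j, α j • g j⟫) :
    ∃ c : ℝ, 0 < c ∧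
      (∑ j, α j • g j) = c • ((1 / ‖g 0‖) • g 0 + (1 / ‖g 1‖) • g 1) := by
  have hg0 : g 0 ≠ 0 := hind.ne_zero 0
  have hg1 : g 1 ≠ 0 := hind.ne_zero 1
  have hn0 : (0:ℝ) < ‖g 0‖ := norm_pos_iff.mpr hg0
  have hn1 : (0:ℝ) < ‖g 1‖ := norm_pos_iff.mpr hg1
  have h0 := heq 0
  have h1 := heq 1
  simp only [Fin.sum_univ_two, inner_add_right, real_inner_smul_right,
    real_inner_self_eq_norm_sq] at h0 h1
  have hb : ⟪g 1, g 0⟫ = ⟪g 0, g 1⟫ := real_inner_comm _ _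
  have hα0 := hα 0
  have hα1 := hα 1
  -- α0 * (α0 * ‖g0‖² + α1 * b) = 1 and similarly
  have e0 : α 0 * (α 0 * ‖g 0‖ ^ 2 + α 1 * ⟪g 0, g 1⟫) = 1 := by
    rw [h0]; field_simp
  have e1 : α 1 * (α 0 * ⟪g 0, g 1⟫ + α 1 * ‖g 1‖ ^ 2) = 1 := by
    rw [hb] at h1; rw [h1]; field_simp
  have hsq : (α 0 * ‖g 0‖) ^ 2 = (α 1 * ‖g 1‖) ^ 2 := by ring_nf; nlinarith [e0, e1]
  have hkey : α 0 * ‖g 0‖ = α 1 * ‖g 1‖ := by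
    have h0' : (0:ℝ) ≤ α 0 * ‖g 0‖ := by positivity
    have h1' : (0:ℝ) ≤ α 1 * ‖g 1‖ := by positivity
    nlinarith [hsq, h0', h1']
  refine ⟨α 0 * ‖g 0‖, by positivity, ?_⟩
  rw [Fin.sum_univ_two, smul_add, smul_smul, smul_smul]
  congr 1
  · congr 1
    field_simp
  · congr 1
    rw [hkey]
    field_simp
end

section
/- Let g₁, ..., g_K ∈ ℝ^d be linearly independent and suppose Δθ* maximizes ∑ᵢ log(gᵢᵀΔθ) over the ball B_ε subject to gᵢᵀΔθ > 0 for all i. Then Δθ* is a positive multiple of ∑ᵢ αᵢgᵢ where α > 0 satisfies GᵀGα = 1/α elementwise. -/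
set_option maxHeartbeats 800000


open RealInnerProductSpace

/-- Claim 3.1: a maximizer of `∑ᵢ log(gᵢᵀΔθ)` over the ball of radius `ε` (subject to
`gᵢᵀΔθ > 0`) is, up to positive scaling, `∑ᵢ αᵢgᵢ` where `α > 0` solves `GᵀGα = 1/α`. -/
theorem stmt_17 {d K : ℕ} (hK : 0 < K) (g : Fin K → EuclideanSpace ℝ (Fin d))
    (hind : LinearIndependent ℝ g) (ε : ℝ) (hε : 0 < ε)
    (Δθ : EuclideanSpace ℝ (Fin d))
    (hmem : ‖Δθ‖ ≤ ε) (hfeas : ∀ i, 0 < ⟪g i, Δθ⟫)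
    (hmax : ∀ x : EuclideanSpace ℝ (Fin d), ‖x‖ ≤ ε → (∀ i, 0 < ⟪g i, x⟫) →
      ∑ i, Real.log ⟪g i, x⟫ ≤ ∑ i, Real.log ⟪g i, Δθ⟫) :
    ∃ (c : ℝ) (α : Fin K → ℝ), 0 < c ∧ (∀ i, 0 < α i) ∧
      (∀ i, ⟪g i, ∑ j, α j • g j⟫ = 1 / α i) ∧
      Δθ = c • ∑ j, α j • g j := by
  set a : Fin K → ℝ := fun i => ⟪g i, Δθ⟫ with ha
  have hKpos : (0:ℝ) < K := Nat.cast_pos.mpr hK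
  -- Δθ ≠ 0
  have hΔne : Δθ ≠ 0 := by
    intro h
    have h0 := hfeas ⟨0, hK⟩
    rw [h, inner_zero_right] at h0
    exact lt_irrefl 0 h0
  have hΔpos : 0 < ‖Δθ‖ := norm_pos_iff.mpr hΔne
  -- Step A: the maximizer has norm ε
  have hnorm : ‖Δθ‖ = ε := by
    by_contra h
    have hlt : ‖Δθ‖ < ε := lt_of_le_of_ne hmem h
    set s := ε / ‖Δθ‖ with hs
    have hs1 : 1 < s := (one_lt_div hΔpos).mpr hlt
    have hs0 : 0 < s := lt_trans one_pos hs1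
    have hfe : ∀ i, 0 < ⟪g i, s • Δθ⟫ := fun i => by
      rw [real_inner_smul_right]; exact mul_pos hs0 (hfeas i)
    have hn : ‖s • Δθ‖ ≤ ε := by
      rw [norm_smul, Real.norm_eq_abs, abs_of_pos hs0, hs,
        div_mul_cancel₀ _ (ne_of_gt hΔpos)]
    have hle := hmax _ hn hfe
    have heq : ∀ i, Real.log ⟪g i, s • Δθ⟫ = Real.log s + Real.log (a i) := by
      intro i
      rw [real_inner_smul_right, Real.log_mul (ne_of_gt hs0) (ne_of_gt (hfeas i))]
    rw [Finset.sum_congr rfl (fun i _ => heq i), Finset.sum_add_distrib,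
      Finset.sum_const, Finset.card_univ, Fintype.card_fin] at hle
    have hlog : 0 < Real.log s := Real.log_pos hs1
    have hrfl : (∑ x : Fin K, Real.log (a x)) = ∑ i : Fin K, Real.log ⟪g i, Δθ⟫ := rfl
    rw [hrfl, nsmul_eq_mul] at hle
    nlinarith [hle, hlog, hKpos]
  -- Step B: first-order condition along the sphere
  have key : ∀ w : EuclideanSpace ℝ (Fin d), ‖w‖ ≤ ε → ⟪Δθ, w⟫ = 0 →
      ∑ i, ⟪g i, w⟫ / a i = 0 := by
    intro w hw hortho
    set b : Fin K → ℝ := fun i => ⟪g i, w⟫ with hb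
    set F : ℝ → ℝ := fun t => ∑ i, Real.log (Real.cos t * a i + Real.sin t * b i)
      with hF
    have hx : ∀ t, ∀ i, ⟪g i, Real.cos t • Δθ + Real.sin t • w⟫
        = Real.cos t * a i + Real.sin t * b i := by
      intro t i
      rw [inner_add_right, real_inner_smul_right, real_inner_smul_right]
    have hxt : ∀ t, ‖Real.cos t • Δθ + Real.sin t • w‖ ≤ ε := by
      intro t
      have h2 : ‖Real.cos t • Δθ + Real.sin t • w‖ ^ 2 ≤ ε ^ 2 := by
        rw [norm_add_sq_real, norm_smul, norm_smul, real_inner_smul_left,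
          real_inner_smul_right, hortho, hnorm]
        have hsc := Real.sin_sq_add_cos_sq t
        have h1 : |Real.cos t| ^ 2 = Real.cos t ^ 2 := sq_abs _
        have h2 : |Real.sin t| ^ 2 = Real.sin t ^ 2 := sq_abs _
        have hwn : (0:ℝ) ≤ ‖w‖ := norm_nonneg w
        simp only [Real.norm_eq_abs]
        nlinarith [sq_nonneg (Real.sin t), sq_nonneg (Real.cos t),
          mul_le_mul_of_nonneg_left (mul_le_mul hw hw hwn hε.le) (sq_nonneg (Real.sin t))]
      calc ‖Real.cos t • Δθ + Real.sin t • w‖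
          = Real.sqrt (‖Real.cos t • Δθ + Real.sin t • w‖ ^ 2) :=
            (Real.sqrt_sq (norm_nonneg _)).symm
        _ ≤ Real.sqrt (ε ^ 2) := Real.sqrt_le_sqrt h2
        _ = ε := Real.sqrt_sq hε.le
    have hev : ∀ᶠ t in nhds (0:ℝ), ∀ i, 0 < Real.cos t * a i + Real.sin t * b i := by
      rw [Filter.eventually_all]
      intro i
      have hc : Continuous fun t => Real.cos t * a i + Real.sin t * b i :=
        (Real.continuous_cos.mul continuous_const).add
          (Real.continuous_sin.mul continuous_const)
      have h0 : (0:ℝ) < Real.cos 0 * a i + Real.sin 0 * b i := by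
        simpa using hfeas i
      exact (isOpen_lt continuous_const hc).mem_nhds h0
    have hmaxF : IsLocalMax F 0 := by
      filter_upwards [hev] with t hpos
      have h1 := hmax (Real.cos t • Δθ + Real.sin t • w) (hxt t)
        (fun i => by rw [hx]; exact hpos i)
      have h2 : F t = ∑ i, Real.log ⟪g i, Real.cos t • Δθ + Real.sin t • w⟫ := by
        rw [hF]; exact Finset.sum_congr rfl fun i _ => by rw [hx]
      have h3 : F 0 = ∑ i, Real.log (a i) := by
        rw [hF]; exact Finset.sum_congr rfl fun i _ => by simp
      rw [h2, h3]; exact h1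
    have hF' : HasDerivAt F (∑ i, b i / a i) 0 := by
      have hd : HasDerivAt F (∑ i, (-Real.sin 0 * a i + Real.cos 0 * b i) /
          (Real.cos 0 * a i + Real.sin 0 * b i)) 0 := by
        rw [hF]
        apply HasDerivAt.fun_sum
        intro i _
        have hci : HasDerivAt (fun t => Real.cos t * a i + Real.sin t * b i)
            (-Real.sin 0 * a i + Real.cos 0 * b i) 0 :=
          ((Real.hasDerivAt_cos 0).mul_const _).add ((Real.hasDerivAt_sin 0).mul_const _)
        exact hci.log (by simpa using (ne_of_gt (hfeas i)))
      have : (∑ i, (-Real.sin 0 * a i + Real.cos 0 * b i) /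
          (Real.cos 0 * a i + Real.sin 0 * b i)) = ∑ i, b i / a i := by
        exact Finset.sum_congr rfl fun i _ => by simp
      rwa [this] at hd
    have := hmaxF.hasDerivAt_eq_zero hF'
    simpa using this
  -- Step C: u := ∑ (1/aᵢ) • gᵢ is parallel to Δθ
  set u : EuclideanSpace ℝ (Fin d) := ∑ i, (1 / a i) • g i with hu
  have hinner_u : ∀ w : EuclideanSpace ℝ (Fin d), ⟪u, w⟫ = ∑ i, ⟪g i, w⟫ / a i := by
    intro w
    rw [hu, sum_inner]
    exact Finset.sum_congr rfl fun i _ => by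
      rw [real_inner_smul_left, one_div, inv_mul_eq_div]
  have huΔ : ⟪Δθ, u⟫ = K := by
    rw [hu, inner_sum]
    have : ∀ i ∈ Finset.univ, ⟪Δθ, (1 / a i) • g i⟫ = 1 := fun i _ => by
      rw [real_inner_smul_right, real_inner_comm]
      exact one_div_mul_cancel (ne_of_gt (hfeas i))
    rw [Finset.sum_congr rfl this]
    simp
  set w₀ : EuclideanSpace ℝ (Fin d) := u - ((K : ℝ) / ε ^ 2) • Δθ with hw₀
  have horth : ⟪Δθ, w₀⟫ = 0 := by
    rw [hw₀, inner_sub_right, real_inner_smul_right, real_inner_self_eq_norm_sq,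
      hnorm, huΔ, div_mul_cancel₀ _ (ne_of_gt (pow_pos hε 2))]
    ring
  have huw₀ : ⟪u, w₀⟫ = 0 := by
    set s := ε / (ε + ‖w₀‖) with hsdef
    have hspos : 0 < s := div_pos hε (by positivity)
    have hle : ‖s • w₀‖ ≤ ε := by
      rw [norm_smul, Real.norm_eq_abs, abs_of_pos hspos, hsdef]
      rw [div_mul_eq_mul_div, div_le_iff₀ (by positivity)]
      nlinarith [norm_nonneg w₀, hε]
    have hor : ⟪Δθ, s • w₀⟫ = 0 := by
      rw [real_inner_smul_right, horth, mul_zero]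
    have hk := key (s • w₀) hle hor
    rw [← hinner_u, real_inner_smul_right] at hk
    exact (mul_eq_zero.mp hk).resolve_left (ne_of_gt hspos)
  have hw₀0 : w₀ = 0 := by
    have : ⟪w₀, w₀⟫ = 0 := by
      nth_rewrite 1 [hw₀]
      rw [inner_sub_left, huw₀, real_inner_smul_left, horth]
      ring
    exact inner_self_eq_zero.mp this
  have huΔθ : u = ((K : ℝ) / ε ^ 2) • Δθ := by
    have := sub_eq_zero.mp hw₀0
    exact this
  -- Step D: construct c and α
  set r := Real.sqrt K with hrdef
  have hrpos : 0 < r := Real.sqrt_pos.mpr hKpos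
  have hrr : r * r = K := Real.mul_self_sqrt (Nat.cast_nonneg K)
  refine ⟨ε / r, fun i => (ε / r) / a i, div_pos hε hrpos,
    fun i => div_pos (div_pos hε hrpos) (hfeas i), ?_, ?_⟩
  · -- first compute the sum
    have hsum : (∑ j, ((ε / r) / a j) • g j) = (r / ε) • Δθ := by
      have h1 : (∑ j, ((ε / r) / a j) • g j) = (ε / r) • u := by
        rw [hu, Finset.smul_sum]
        exact Finset.sum_congr rfl fun j _ => by
          rw [smul_smul]
          congr 1
          field_simp
      rw [h1, huΔθ, smul_smul]
      congr 1
      field_simp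
      nlinarith [hrr]
    intro i
    rw [hsum, real_inner_smul_right, one_div_div]
    show (r / ε) * a i = a i / (ε / r)
    rw [div_div_eq_mul_div]
    ring
  · have hsum : (∑ j, ((ε / r) / a j) • g j) = (r / ε) • Δθ := by
      have h1 : (∑ j, ((ε / r) / a j) • g j) = (ε / r) • u := by
        rw [hu, Finset.smul_sum]
        exact Finset.sum_congr rfl fun j _ => by
          rw [smul_smul]
          congr 1
          field_simp
      rw [h1, huΔθ, smul_smul]
      congr 1
      field_simp
      nlinarith [hrr]
    have hc1 : (ε / r) * (r / ε) = 1 := by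
      field_simp
    rw [hsum, smul_smul, hc1, one_smul]
end
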